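/- arXiv:1701.02334 — 6 statements merged into one kernel-verified Lean document; each statement's English description precedes it below -/
import Mathlib

section
/- For every real t with 0 < 1 - γ = t ≤ 1 where 0 ≤ γ ≤ 4.444·δ and 0 ≤ δ ≤ 0.0045, one has 2 ≤ t + 1/t ≤ 2 + 20.153·δ². -/
theorem t_add_inv_bounds (t γ δ : ℝ) (hδ0 : 0 ≤ δ) (hδ : δ ≤ 0.0045)
    (hγ0 : 0 ≤ γ) (hγ : γ ≤ 4.444 * δ) (ht : t = 1 - γ) (ht0 : 0 < t) (ht1 : t ≤ 1) :
    2 ≤ t + 1 / t ∧ t + 1 / t ≤ 2 + 20.153 * δ ^ 2 := by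
  have hinv : t * (1 / t) = 1 := mul_one_div_cancel (ne_of_gt ht0)
  have hγle : γ ≤ 4.444 * 0.0045 := le_trans hγ (by nlinarith)
  constructor
  · nlinarith [sq_nonneg (t - 1), mul_pos ht0 (by positivity : (0:ℝ) < 1/t)]
  · nlinarith [sq_nonneg (γ - 4.444 * δ), mul_pos ht0 (by positivity : (0:ℝ) < 1/t),
      sq_nonneg δ, sq_nonneg γ, mul_nonneg hγ0 hδ0]
end

section
/- Let A be a symmetric 4×4 real matrix with a₁₂ = 0 and a₃₄ = 0, and let φ, ψ ∈ [-π/4, π/4]. Define a₁₃' = a₁₄ cos φ cos ψ - a₂₃ sin φ sin ψ and a₂₄' = a₁₄ sin φ sin ψ - a₂₃ cos φ cos ψ. Then (a₁₃')² + (a₂₄')² ≥ (1/2)(|a₁₄| - |a₂₃|)². -/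
open Real

theorem new_pivot_lower_bound (A : Matrix (Fin 4) (Fin 4) ℝ) (hA : A.IsSymm)
    (h12 : A 0 1 = 0) (h34 : A 2 3 = 0)
    (φ ψ : ℝ) (hφ : φ ∈ Set.Icc (-(π/4)) (π/4)) (hψ : ψ ∈ Set.Icc (-(π/4)) (π/4)) :
    (A 0 3 * Real.cos φ * Real.cos ψ - A 1 2 * Real.sin φ * Real.sin ψ) ^ 2 +
      (A 0 3 * Real.sin φ * Real.sin ψ - A 1 2 * Real.cos φ * Real.cos ψ) ^ 2 ≥
    (1 / 2) * (|A 0 3| - |A 1 2|) ^ 2 := by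
  obtain ⟨hφ1, hφ2⟩ := hφ
  obtain ⟨hψ1, hψ2⟩ := hψ
  have hπ := Real.pi_pos
  have hcφ : Real.cos (2 * φ) ≥ 0 := by
    apply Real.cos_nonneg_of_mem_Icc
    constructor <;> nlinarith
  have hcψ : Real.cos (2 * ψ) ≥ 0 := by
    apply Real.cos_nonneg_of_mem_Icc
    constructor <;> nlinarith
  have hsφ : Real.sin φ ^ 2 ≤ 1 / 2 := by
    have h1 := Real.cos_two_mul φ
    have h2 := Real.sin_sq_add_cos_sq φ
    linarith
  have hsψ : Real.sin ψ ^ 2 ≤ 1 / 2 := by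
    have h1 := Real.cos_two_mul ψ
    have h2 := Real.sin_sq_add_cos_sq ψ
    linarith
  set a := A 0 3
  set b := A 1 2
  have hpφ := Real.sin_sq_add_cos_sq φ
  have hpψ := Real.sin_sq_add_cos_sq ψ
  have hcs : (Real.cos φ * Real.cos ψ) ^ 2 + (Real.sin φ * Real.sin ψ) ^ 2 ≥ 1 / 2 := by
    nlinarith [mul_nonneg (by linarith : (0:ℝ) ≤ 1 / 2 - Real.sin φ ^ 2)
      (by linarith : (0:ℝ) ≤ 1 - 2 * Real.sin ψ ^ 2), hpφ, hpψ]
  have hab1 : a * b ≤ |a| * |b| := by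
    rw [← abs_mul]; exact le_abs_self _
  have hab2 : -(a * b) ≤ |a| * |b| := by
    rw [← abs_mul]; exact neg_le_abs _
  have ha2 : |a| ^ 2 = a ^ 2 := sq_abs a
  have hb2 : |b| ^ 2 = b ^ 2 := sq_abs b
  nlinarith [mul_nonneg (by linarith : (0:ℝ) ≤ |a| * |b| - a * b)
      (sq_nonneg (Real.cos φ * Real.cos ψ + Real.sin φ * Real.sin ψ)),
    mul_nonneg (by linarith : (0:ℝ) ≤ |a| * |b| + a * b)
      (sq_nonneg (Real.cos φ * Real.cos ψ - Real.sin φ * Real.sin ψ)),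
    mul_nonneg (by linarith : (0:ℝ) ≤ (Real.cos φ * Real.cos ψ) ^ 2 + (Real.sin φ * Real.sin ψ) ^ 2 - 1 / 2)
      (sq_nonneg (|a| - |b|))]
end

section
/- Let A be a symmetric 4×4 real matrix with a₁₂ = 0, a₃₄ = 0 and a₁₃ = 0. Apply four Jacobi steps under the pivot order (1,3),(2,4),(1,4),(2,3) (with rotation angles in [-π/4, π/4] chosen by the standard Jacobi formula) to obtain A⁽⁴⁾. Then S²(A⁽⁴⁾) ≤ (1/2)·S²(A), where S(X)² = Σ_{i<j} x_{ij}². -/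
open Real Matrix

/-- The plane rotation matrix `R(i,j,φ)` of order 4. -/
noncomputable def planeRot (i j : Fin 4) (φ : ℝ) : Matrix (Fin 4) (Fin 4) ℝ :=
  Matrix.of fun r s =>
    if r = i ∧ s = i then Real.cos φ
    else if r = i ∧ s = j then -Real.sin φ
    else if r = j ∧ s = i then Real.sin φ
    else if r = j ∧ s = j then Real.cos φ
    else if r = s then 1 else 0

/-- `φ ∈ [-π/4, π/4]` is the Jacobi rotation angle for pivot element `a` and
diagonal difference `d`, i.e. `tan 2φ = 2a/d` (equivalently
`a cos 2φ = (d/2) sin 2φ`), with the convention `φ = 0` if `a = 0`. -/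
def IsJacobiAngle (a d φ : ℝ) : Prop :=
  φ ∈ Set.Icc (-(π/4)) (π/4) ∧ (a = 0 → φ = 0) ∧
    a * Real.cos (2 * φ) = (d / 2) * Real.sin (2 * φ)

/-- One Jacobi step at pivot `(i,j)` with angle `φ`. -/
noncomputable def jacobiStep (A : Matrix (Fin 4) (Fin 4) ℝ) (i j : Fin 4) (φ : ℝ) :
    Matrix (Fin 4) (Fin 4) ℝ :=
  (planeRot i j φ)ᵀ * A * planeRot i j φ

/-- The square of the off-norm: `S(X)² = ∑_{i<j} x_{ij}²`. -/
def offSq (X : Matrix (Fin 4) (Fin 4) ℝ) : ℝ :=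
  ∑ i : Fin 4, ∑ j : Fin 4, if i < j then (X i j) ^ 2 else 0

lemma planeRot_zero (i j : Fin 4) : planeRot i j 0 = 1 := by
  ext r s
  simp only [planeRot, Matrix.of_apply, Real.cos_zero, Real.sin_zero, neg_zero, Matrix.one_apply]
  split_ifs <;> simp_all <;> omega

lemma jacobiStep_zero (A : Matrix (Fin 4) (Fin 4) ℝ) (i j : Fin 4) : jacobiStep A i j 0 = A := by
  simp [jacobiStep, planeRot_zero]

lemma isSymm_jacobiStep {A : Matrix (Fin 4) (Fin 4) ℝ} (h : A.IsSymm) (i j : Fin 4) (φ : ℝ) :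
    (jacobiStep A i j φ).IsSymm := by
  unfold Matrix.IsSymm jacobiStep
  rw [Matrix.transpose_mul, Matrix.transpose_mul, Matrix.transpose_transpose, h.eq,
    Matrix.mul_assoc]

lemma offSq_eq (X : Matrix (Fin 4) (Fin 4) ℝ) :
    offSq X = (X 0 1)^2 + (X 0 2)^2 + (X 0 3)^2 + (X 1 2)^2 + (X 1 3)^2 + (X 2 3)^2 := by
  simp [offSq, Fin.sum_univ_four]
  ring

set_option maxHeartbeats 1000000 in
theorem offnorm_halved_of_a13_zero (A : Matrix (Fin 4) (Fin 4) ℝ) (hA : A.IsSymm)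
    (h12 : A 0 1 = 0) (h34 : A 2 3 = 0) (h13 : A 0 2 = 0)
    (φ₁ φ₂ φ₃ φ₄ : ℝ)
    (A₁ A₂ A₃ A₄ : Matrix (Fin 4) (Fin 4) ℝ)
    (hφ₁ : IsJacobiAngle (A 0 2) (A 0 0 - A 2 2) φ₁)
    (hA₁ : A₁ = jacobiStep A 0 2 φ₁)
    (hφ₂ : IsJacobiAngle (A₁ 1 3) (A₁ 1 1 - A₁ 3 3) φ₂)
    (hA₂ : A₂ = jacobiStep A₁ 1 3 φ₂)
    (hφ₃ : IsJacobiAngle (A₂ 0 3) (A₂ 0 0 - A₂ 3 3) φ₃)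
    (hA₃ : A₃ = jacobiStep A₂ 0 3 φ₃)
    (hφ₄ : IsJacobiAngle (A₃ 1 2) (A₃ 1 1 - A₃ 2 2) φ₄)
    (hA₄ : A₄ = jacobiStep A₃ 1 2 φ₄) :
    offSq A₄ ≤ (1 / 2) * offSq A := by
  -- step 1 is the identity
  have hφ10 : φ₁ = 0 := hφ₁.2.1 h13
  have hA₁' : A₁ = A := by rw [hA₁, hφ10, jacobiStep_zero]
  rw [hA₁'] at hφ₂ hA₂
  have pyth₂ := Real.sin_sq_add_cos_sq φ₂
  have pyth₃ := Real.sin_sq_add_cos_sq φ₃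
  have pyth₄ := Real.sin_sq_add_cos_sq φ₄
  -- symmetric entries of A
  have a10 : A 1 0 = A 0 1 := hA.apply 0 1
  have a21 : A 2 1 = A 1 2 := hA.apply 1 2
  have a31 : A 3 1 = A 1 3 := hA.apply 1 3
  have a32 : A 3 2 = A 2 3 := hA.apply 2 3
  -- entries of A₂
  have e01 : A₂ 0 1 = Real.sin φ₂ * A 0 3 := by
    rw [hA₂]
    simp [jacobiStep, Matrix.mul_apply, planeRot, Fin.sum_univ_four, h12]
    ring
  have e02 : A₂ 0 2 = 0 := by
    rw [hA₂]
    simp [jacobiStep, Matrix.mul_apply, planeRot, Fin.sum_univ_four, h13]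
  have e12 : A₂ 1 2 = Real.cos φ₂ * A 1 2 := by
    rw [hA₂]
    simp [jacobiStep, Matrix.mul_apply, planeRot, Fin.sum_univ_four, a32, h34]
  have e13 : A₂ 1 3 = 0 := by
    have hc := hφ₂.2.2
    rw [Real.sin_two_mul, Real.cos_two_mul] at hc
    rw [hA₂]
    simp [jacobiStep, Matrix.mul_apply, planeRot, Fin.sum_univ_four, a31]
    linear_combination hc - A 1 3 * pyth₂
  have e23 : A₂ 2 3 = -(Real.sin φ₂) * A 1 2 := by
    rw [hA₂]
    simp [jacobiStep, Matrix.mul_apply, planeRot, Fin.sum_univ_four, a21, h34]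
    ring
  -- symmetry of A₂
  have hS2 : A₂.IsSymm := hA₂ ▸ isSymm_jacobiStep hA 1 3 φ₂
  have s10 : A₂ 1 0 = A₂ 0 1 := hS2.apply 0 1
  have s20 : A₂ 2 0 = A₂ 0 2 := hS2.apply 0 2
  have s30 : A₂ 3 0 = A₂ 0 3 := hS2.apply 0 3
  have s31 : A₂ 3 1 = A₂ 1 3 := hS2.apply 1 3
  have s32 : A₂ 3 2 = A₂ 2 3 := hS2.apply 2 3
  -- entries of A₃
  have f01 : A₃ 0 1 = Real.cos φ₃ * Real.sin φ₂ * A 0 3 := by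
    rw [hA₃]
    simp [jacobiStep, Matrix.mul_apply, planeRot, Fin.sum_univ_four, s31, e13, e01]
    ring
  have f02 : A₃ 0 2 = -(Real.sin φ₃ * Real.sin φ₂) * A 1 2 := by
    rw [hA₃]
    simp [jacobiStep, Matrix.mul_apply, planeRot, Fin.sum_univ_four, s32, e23, e02]
    ring
  have f03 : A₃ 0 3 = 0 := by
    have hc := hφ₃.2.2
    rw [Real.sin_two_mul, Real.cos_two_mul] at hc
    rw [hA₃]
    simp [jacobiStep, Matrix.mul_apply, planeRot, Fin.sum_univ_four, s30]
    linear_combination hc - A₂ 0 3 * pyth₃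
  have f12 : A₃ 1 2 = Real.cos φ₂ * A 1 2 := by
    rw [hA₃]
    simp [jacobiStep, Matrix.mul_apply, planeRot, Fin.sum_univ_four, e12]
  have f13 : A₃ 1 3 = -(Real.sin φ₃ * Real.sin φ₂) * A 0 3 := by
    rw [hA₃]
    simp [jacobiStep, Matrix.mul_apply, planeRot, Fin.sum_univ_four, s10, e13, e01]
    ring
  have f23 : A₃ 2 3 = -(Real.cos φ₃ * Real.sin φ₂) * A 1 2 := by
    rw [hA₃]
    simp [jacobiStep, Matrix.mul_apply, planeRot, Fin.sum_univ_four, s20, e23, e02]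
    ring
  -- symmetry of A₃
  have hS3 : A₃.IsSymm := hA₃ ▸ isSymm_jacobiStep hS2 0 3 φ₃
  have t21 : A₃ 2 1 = A₃ 1 2 := hS3.apply 1 2
  -- entries of A₄
  have g01 : A₄ 0 1 = Real.cos φ₄ * A₃ 0 1 + Real.sin φ₄ * A₃ 0 2 := by
    rw [hA₄]
    simp [jacobiStep, Matrix.mul_apply, planeRot, Fin.sum_univ_four]
    ring
  have g02 : A₄ 0 2 = -(Real.sin φ₄) * A₃ 0 1 + Real.cos φ₄ * A₃ 0 2 := by
    rw [hA₄]
    simp [jacobiStep, Matrix.mul_apply, planeRot, Fin.sum_univ_four]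
    ring
  have g03 : A₄ 0 3 = 0 := by
    rw [hA₄]
    simp [jacobiStep, Matrix.mul_apply, planeRot, Fin.sum_univ_four, f03]
  have g12 : A₄ 1 2 = 0 := by
    have hc := hφ₄.2.2
    rw [Real.sin_two_mul, Real.cos_two_mul] at hc
    rw [hA₄]
    simp [jacobiStep, Matrix.mul_apply, planeRot, Fin.sum_univ_four, t21]
    linear_combination hc - A₃ 1 2 * pyth₄
  have g13 : A₄ 1 3 = Real.cos φ₄ * A₃ 1 3 + Real.sin φ₄ * A₃ 2 3 := by
    rw [hA₄]
    simp [jacobiStep, Matrix.mul_apply, planeRot, Fin.sum_univ_four]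
  have g23 : A₄ 2 3 = -(Real.sin φ₄) * A₃ 1 3 + Real.cos φ₄ * A₃ 2 3 := by
    rw [hA₄]
    simp [jacobiStep, Matrix.mul_apply, planeRot, Fin.sum_univ_four]
  -- key identity
  have key : offSq A₄ = Real.sin φ₂ ^ 2 * ((A 0 3)^2 + (A 1 2)^2) := by
    rw [offSq_eq, g01, g02, g03, g12, g13, g23, f01, f02, f13, f23]
    linear_combination (Real.sin φ₂^2 * (Real.cos φ₃^2 + Real.sin φ₃^2) *
        ((A 0 3)^2 + (A 1 2)^2)) * pyth₄ +
      (Real.sin φ₂^2 * ((A 0 3)^2 + (A 1 2)^2)) * pyth₃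
  -- sin φ₂ ^ 2 ≤ 1/2
  have hs2 : Real.sin φ₂ ^ 2 ≤ 1 / 2 := by
    obtain ⟨⟨hl, hr⟩, -, -⟩ := hφ₂
    have hcos : 0 ≤ Real.cos (2 * φ₂) := by
      apply Real.cos_nonneg_of_mem_Icc
      constructor <;> [linarith; linarith]
    rw [Real.cos_two_mul] at hcos
    linarith
  rw [key, offSq_eq A, h12, h13, h34]
  have h1 : Real.sin φ₂ ^ 2 * ((A 0 3)^2 + (A 1 2)^2) ≤ 1/2 * ((A 0 3)^2 + (A 1 2)^2) :=
    mul_le_mul_of_nonneg_right hs2 (by positivity)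
  linarith [sq_nonneg (A 1 3), h1]
end

section
/- Let A be a symmetric 4×4 real matrix with a₁₂ = 0, a₃₄ = 0 and a₁₄ = 0. Apply four Jacobi steps under the pivot order (1,3),(2,4),(1,4),(2,3) to obtain A⁽⁴⁾. Then S²(A⁽⁴⁾) ≤ (1/2)·S²(A), where S(X)² = Σ_{i<j} x_{ij}². -/
open Real Matrix

lemma jacobiStep_isSymm {A : Matrix (Fin 4) (Fin 4) ℝ} (i j : Fin 4) (φ : ℝ)
    (hA : A.IsSymm) : (jacobiStep A i j φ).IsSymm := by
  simp [Matrix.IsSymm, jacobiStep, Matrix.transpose_mul, Matrix.mul_assoc, hA.eq]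

lemma sin_sq_le_half {x : ℝ} (h : x ∈ Set.Icc (-(π/4)) (π/4)) : Real.sin x ^ 2 ≤ 1/2 := by
  have h0 : 0 ≤ Real.cos (2*x) :=
    Real.cos_nonneg_of_mem_Icc ⟨by linarith [h.1, Real.pi_pos], by linarith [h.2]⟩
  rw [Real.cos_two_mul'] at h0
  nlinarith [Real.sin_sq_add_cos_sq x]

set_option maxHeartbeats 2000000 in
theorem offnorm_halved_of_a14_zero (A : Matrix (Fin 4) (Fin 4) ℝ) (hA : A.IsSymm)
    (h12 : A 0 1 = 0) (h34 : A 2 3 = 0) (h14 : A 0 3 = 0)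
    (φ₁ φ₂ φ₃ φ₄ : ℝ)
    (A₁ A₂ A₃ A₄ : Matrix (Fin 4) (Fin 4) ℝ)
    (hφ₁ : IsJacobiAngle (A 0 2) (A 0 0 - A 2 2) φ₁)
    (hA₁ : A₁ = jacobiStep A 0 2 φ₁)
    (hφ₂ : IsJacobiAngle (A₁ 1 3) (A₁ 1 1 - A₁ 3 3) φ₂)
    (hA₂ : A₂ = jacobiStep A₁ 1 3 φ₂)
    (hφ₃ : IsJacobiAngle (A₂ 0 3) (A₂ 0 0 - A₂ 3 3) φ₃)
    (hA₃ : A₃ = jacobiStep A₂ 0 3 φ₃)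
    (hφ₄ : IsJacobiAngle (A₃ 1 2) (A₃ 1 1 - A₃ 2 2) φ₄)
    (hA₄ : A₄ = jacobiStep A₃ 1 2 φ₄) :
    offSq A₄ ≤ (1 / 2) * offSq A := by
  have hS1 : A₁.IsSymm := hA₁ ▸ jacobiStep_isSymm 0 2 φ₁ hA
  have hS2 : A₂.IsSymm := hA₂ ▸ jacobiStep_isSymm 1 3 φ₂ hS1
  have hS3 : A₃.IsSymm := hA₃ ▸ jacobiStep_isSymm 0 3 φ₃ hS2
  -- Step 1 entries
  have z1 : A₁ 0 2 = 0 := by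
    have e : jacobiStep A 0 2 φ₁ 0 2 =
        (Real.cos φ₁ ^ 2 - Real.sin φ₁ ^ 2) * A 0 2
          - Real.sin φ₁ * Real.cos φ₁ * (A 0 0 - A 2 2) := by
      simp [jacobiStep, planeRot, Matrix.mul_apply, Fin.sum_univ_four, hA.apply 0 2]
      ring
    have hc := hφ₁.2.2
    rw [Real.cos_two_mul', Real.sin_two_mul] at hc
    rw [hA₁, e]
    linear_combination hc
  have e101 : A₁ 0 1 = Real.sin φ₁ * A 1 2 := by
    rw [hA₁]
    simp [jacobiStep, planeRot, Matrix.mul_apply, Fin.sum_univ_four, hA.apply 1 2, h12]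
    try ring
  have e103 : A₁ 0 3 = 0 := by
    rw [hA₁]
    try ring
    simp [jacobiStep, planeRot, Matrix.mul_apply, Fin.sum_univ_four, h14, h34]
    try ring
  have e112 : A₁ 1 2 = Real.cos φ₁ * A 1 2 := by
    rw [hA₁]
    try ring
    simp [jacobiStep, planeRot, Matrix.mul_apply, Fin.sum_univ_four, hA.apply 0 1, h12]
    try ring
  have e113 : A₁ 1 3 = A 1 3 := by
    rw [hA₁]
    simp [jacobiStep, planeRot, Matrix.mul_apply, Fin.sum_univ_four]
    try ring
  have e123 : A₁ 2 3 = 0 := by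
    rw [hA₁]
    try ring
    simp [jacobiStep, planeRot, Matrix.mul_apply, Fin.sum_univ_four, hA.apply 0 3, h14, h34]
    try ring
  -- Step 2 entries
  have z2 : A₂ 1 3 = 0 := by
    have e : jacobiStep A₁ 1 3 φ₂ 1 3 =
        (Real.cos φ₂ ^ 2 - Real.sin φ₂ ^ 2) * A₁ 1 3
          - Real.sin φ₂ * Real.cos φ₂ * (A₁ 1 1 - A₁ 3 3) := by
      simp [jacobiStep, planeRot, Matrix.mul_apply, Fin.sum_univ_four, hS1.apply 1 3]
      ring
    have hc := hφ₂.2.2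
    rw [Real.cos_two_mul', Real.sin_two_mul] at hc
    rw [hA₂, e]
    linear_combination hc
  have e201 : A₂ 0 1 = Real.cos φ₂ * (Real.sin φ₁ * A 1 2) := by
    rw [hA₂]
    simp [jacobiStep, planeRot, Matrix.mul_apply, Fin.sum_univ_four, e101, e103]
    try ring
  have e202 : A₂ 0 2 = 0 := by
    rw [hA₂]
    simp [jacobiStep, planeRot, Matrix.mul_apply, Fin.sum_univ_four, z1]
    try ring
  have e203 : A₂ 0 3 = -(Real.sin φ₂ * (Real.sin φ₁ * A 1 2)) := by
    rw [hA₂]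
    try ring
    simp [jacobiStep, planeRot, Matrix.mul_apply, Fin.sum_univ_four, e101, e103]
    try ring
  have e212 : A₂ 1 2 = Real.cos φ₂ * (Real.cos φ₁ * A 1 2) := by
    rw [hA₂]
    simp [jacobiStep, planeRot, Matrix.mul_apply, Fin.sum_univ_four, hS1.apply 2 3,
      e112, e123]
    try ring
  have e223 : A₂ 2 3 = -(Real.sin φ₂ * (Real.cos φ₁ * A 1 2)) := by
    rw [hA₂]
    simp [jacobiStep, planeRot, Matrix.mul_apply, Fin.sum_univ_four, hS1.apply 1 2,
      e112, e123]
    try ring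
  -- Step 3 entries
  have z3 : A₃ 0 3 = 0 := by
    have e : jacobiStep A₂ 0 3 φ₃ 0 3 =
        (Real.cos φ₃ ^ 2 - Real.sin φ₃ ^ 2) * A₂ 0 3
          - Real.sin φ₃ * Real.cos φ₃ * (A₂ 0 0 - A₂ 3 3) := by
      simp [jacobiStep, planeRot, Matrix.mul_apply, Fin.sum_univ_four, hS2.apply 0 3]
      ring
    have hc := hφ₃.2.2
    rw [Real.cos_two_mul', Real.sin_two_mul] at hc
    rw [hA₃, e]
    linear_combination hc
  have e301 : A₃ 0 1 = Real.cos φ₃ * (Real.cos φ₂ * (Real.sin φ₁ * A 1 2)) := by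
    rw [hA₃]
    simp [jacobiStep, planeRot, Matrix.mul_apply, Fin.sum_univ_four, hS2.apply 1 3,
      e201, z2]
    try ring
  have e302 : A₃ 0 2 = -(Real.sin φ₃ * (Real.sin φ₂ * (Real.cos φ₁ * A 1 2))) := by
    rw [hA₃]
    simp [jacobiStep, planeRot, Matrix.mul_apply, Fin.sum_univ_four, hS2.apply 2 3,
      e202, e223]
    try ring
  have e312 : A₃ 1 2 = Real.cos φ₂ * (Real.cos φ₁ * A 1 2) := by
    rw [hA₃]
    simp [jacobiStep, planeRot, Matrix.mul_apply, Fin.sum_univ_four, e212]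
    try ring
  have e313 : A₃ 1 3 = -(Real.sin φ₃ * (Real.cos φ₂ * (Real.sin φ₁ * A 1 2))) := by
    rw [hA₃]
    simp [jacobiStep, planeRot, Matrix.mul_apply, Fin.sum_univ_four, hS2.apply 0 1,
      e201, z2]
    try ring
  have e323 : A₃ 2 3 = -(Real.cos φ₃ * (Real.sin φ₂ * (Real.cos φ₁ * A 1 2))) := by
    rw [hA₃]
    simp [jacobiStep, planeRot, Matrix.mul_apply, Fin.sum_univ_four, hS2.apply 0 2,
      e202, e223]
    try ring
  -- Step 4 entries
  have z4 : A₄ 1 2 = 0 := by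
    have e : jacobiStep A₃ 1 2 φ₄ 1 2 =
        (Real.cos φ₄ ^ 2 - Real.sin φ₄ ^ 2) * A₃ 1 2
          - Real.sin φ₄ * Real.cos φ₄ * (A₃ 1 1 - A₃ 2 2) := by
      simp [jacobiStep, planeRot, Matrix.mul_apply, Fin.sum_univ_four, hS3.apply 1 2]
      ring
    have hc := hφ₄.2.2
    rw [Real.cos_two_mul', Real.sin_two_mul] at hc
    rw [hA₄, e]
    linear_combination hc
  have e401 : A₄ 0 1 = Real.cos φ₄ * A₃ 0 1 + Real.sin φ₄ * A₃ 0 2 := by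
    rw [hA₄]
    simp [jacobiStep, planeRot, Matrix.mul_apply, Fin.sum_univ_four]
    try ring
  have e402 : A₄ 0 2 = -(Real.sin φ₄ * A₃ 0 1) + Real.cos φ₄ * A₃ 0 2 := by
    rw [hA₄]
    try ring
    simp [jacobiStep, planeRot, Matrix.mul_apply, Fin.sum_univ_four]
    try ring
  have e403 : A₄ 0 3 = 0 := by
    rw [hA₄]
    simp [jacobiStep, planeRot, Matrix.mul_apply, Fin.sum_univ_four, z3]
    try ring
  have e413 : A₄ 1 3 = Real.cos φ₄ * A₃ 1 3 + Real.sin φ₄ * A₃ 2 3 := by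
    rw [hA₄]
    try ring
    simp [jacobiStep, planeRot, Matrix.mul_apply, Fin.sum_univ_four]
    try ring
  have e423 : A₄ 2 3 = -(Real.sin φ₄ * A₃ 1 3) + Real.cos φ₄ * A₃ 2 3 := by
    rw [hA₄]
    try ring
    simp [jacobiStep, planeRot, Matrix.mul_apply, Fin.sum_univ_four]
    try ring
  -- expansions of offSq
  have hoff4 : offSq A₄ =
      A₄ 0 1 ^ 2 + A₄ 0 2 ^ 2 + A₄ 0 3 ^ 2 + A₄ 1 2 ^ 2 + A₄ 1 3 ^ 2 + A₄ 2 3 ^ 2 := by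
    simp [offSq, Fin.sum_univ_four]
    try ring
  have hoffA : offSq A = A 0 2 ^ 2 + A 1 2 ^ 2 + A 1 3 ^ 2 := by
    simp [offSq, Fin.sum_univ_four, h12, h34, h14]
    try ring
  have h1 := Real.sin_sq_add_cos_sq φ₁
  have h2 := Real.sin_sq_add_cos_sq φ₂
  have h3 := Real.sin_sq_add_cos_sq φ₃
  have h4 := Real.sin_sq_add_cos_sq φ₄
  have hs1 : Real.sin φ₁ ^ 2 ≤ 1/2 := sin_sq_le_half hφ₁.1
  have hs2 : Real.sin φ₂ ^ 2 ≤ 1/2 := sin_sq_le_half hφ₂.1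
  have key : offSq A₄ = (A 1 2) ^ 2 *
      (Real.sin φ₁ ^ 2 * Real.cos φ₂ ^ 2 + Real.cos φ₁ ^ 2 * Real.sin φ₂ ^ 2) := by
    rw [hoff4, e401, e402, e403, z4, e413, e423, e301, e302, e313, e323]
    linear_combination
      ((Real.cos φ₃ * (Real.cos φ₂ * (Real.sin φ₁ * A 1 2))) ^ 2 +
        (Real.sin φ₃ * (Real.sin φ₂ * (Real.cos φ₁ * A 1 2))) ^ 2 +
        (Real.sin φ₃ * (Real.cos φ₂ * (Real.sin φ₁ * A 1 2))) ^ 2 +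
        (Real.cos φ₃ * (Real.sin φ₂ * (Real.cos φ₁ * A 1 2))) ^ 2) * h4 +
      (Real.cos φ₂ ^ 2 * Real.sin φ₁ ^ 2 * (A 1 2) ^ 2 +
        Real.sin φ₂ ^ 2 * Real.cos φ₁ ^ 2 * (A 1 2) ^ 2) * h3
  have key2 : offSq A₄ ≤ 1/2 * (A 1 2) ^ 2 := by
    have hid : 1/2 * (A 1 2)^2 - (A 1 2)^2 *
        (Real.sin φ₁ ^ 2 * Real.cos φ₂ ^ 2 + Real.cos φ₁ ^ 2 * Real.sin φ₂ ^ 2) =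
        (A 1 2)^2 * ((1/2 - Real.sin φ₂ ^ 2) * (1 - 2 * Real.sin φ₁ ^ 2)) := by
      linear_combination (-(A 1 2)^2 * Real.sin φ₂ ^ 2) * h1 +
        (-(A 1 2)^2 * Real.sin φ₁ ^ 2) * h2
    have hnn : 0 ≤ (A 1 2)^2 * ((1/2 - Real.sin φ₂ ^ 2) * (1 - 2 * Real.sin φ₁ ^ 2)) :=
      mul_nonneg (sq_nonneg _) (mul_nonneg (by linarith) (by linarith))
    rw [key]
    linarith
  rw [hoffA]
  linarith [key2, sq_nonneg (A 0 2), sq_nonneg (A 1 3)]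
end

section
/- Let 0 < ε ≤ 10⁻⁵ and suppose φ, ψ ∈ [-π/4, π/4] satisfy cos(φ - ψ) ≤ 1.4143·δ for some 0 ≤ δ ≤ 0.0045. Then either φ = π/4 - α and ψ = -π/4 + β with α, β ≥ 0 and α + β ≤ 2.222·δ, or φ = -π/4 + α' and ψ = π/4 - β' with α', β' ≥ 0 and α' + β' ≤ 2.222·δ. Moreover |sin(φ + ψ)| ≤ |φ + ψ| ≤ 2.222·δ and |tan φ + tan ψ| ≤ 4.444·δ. -/
open Real

set_option maxHeartbeats 1000000 in
theorem angles_near_corners (ε δ φ ψ : ℝ)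
    (hε0 : 0 < ε) (hε : ε ≤ 1e-5)
    (hδ0 : 0 ≤ δ) (hδ : δ ≤ 0.0045)
    (hφ : φ ∈ Set.Icc (-(π/4)) (π/4)) (hψ : ψ ∈ Set.Icc (-(π/4)) (π/4))
    (hcos : Real.cos (φ - ψ) ≤ 1.4143 * δ) :
    ((∃ α β : ℝ, 0 ≤ α ∧ 0 ≤ β ∧ α + β ≤ 2.222 * δ ∧
        φ = π/4 - α ∧ ψ = -(π/4) + β) ∨
     (∃ α' β' : ℝ, 0 ≤ α' ∧ 0 ≤ β' ∧ α' + β' ≤ 2.222 * δ ∧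
        φ = -(π/4) + α' ∧ ψ = π/4 - β')) ∧
    |Real.sin (φ + ψ)| ≤ |φ + ψ| ∧ |φ + ψ| ≤ 2.222 * δ ∧
    |Real.tan φ + Real.tan ψ| ≤ 4.444 * δ := by
  obtain ⟨hφ1, hφ2⟩ := hφ
  obtain ⟨hψ1, hψ2⟩ := hψ
  have hπl : (3.1415 : ℝ) < π := by linarith [Real.pi_gt_d6]
  have hπu : π < 3.1416 := by linarith [Real.pi_lt_d6]
  have hxle : |φ - ψ| ≤ π / 2 := abs_le.mpr ⟨by linarith, by linarith⟩
  have hx0 : (0 : ℝ) ≤ |φ - ψ| := abs_nonneg _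
  have key : π / 2 - |φ - ψ| ≤ 2.222 * δ := by
    have h1 : 2 / π * (π / 2 - |φ - ψ|) ≤ Real.sin (π / 2 - |φ - ψ|) :=
      Real.mul_le_sin (by linarith) (by linarith)
    rw [Real.sin_pi_div_two_sub, Real.cos_abs] at h1
    have h2 : 2 / π * (π / 2 - |φ - ψ|) ≤ 1.4143 * δ := le_trans h1 hcos
    have hπ0 : (0 : ℝ) < π := by linarith
    rw [div_mul_eq_mul_div, div_le_iff₀ hπ0] at h2
    nlinarith [mul_le_mul_of_nonneg_left hπu.le hδ0]
  have hsum : |φ + ψ| ≤ 2.222 * δ := by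
    rcases abs_cases (φ - ψ) with ⟨he, _⟩ | ⟨he, _⟩ <;>
      rw [he] at key <;> exact abs_le.mpr ⟨by linarith, by linarith⟩
  refine ⟨?_, Real.abs_sin_le_abs, hsum, ?_⟩
  · rcases le_total ψ φ with h | h
    · left
      refine ⟨π / 4 - φ, ψ + π / 4, by linarith, by linarith, ?_, by ring, by ring⟩
      rw [abs_of_nonneg (by linarith : (0:ℝ) ≤ φ - ψ)] at key
      linarith
    · right
      refine ⟨φ + π / 4, π / 4 - ψ, by linarith, by linarith, ?_, by ring, by ring⟩
      rw [abs_of_nonpos (by linarith : φ - ψ ≤ 0)] at key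
      linarith
  · have hs2 : Real.sqrt 2 ^ 2 = 2 := Real.sq_sqrt (by norm_num)
    have hs2nn : (0:ℝ) ≤ Real.sqrt 2 := Real.sqrt_nonneg 2
    have hs2gt : (1:ℝ) < Real.sqrt 2 := by nlinarith
    have hcosb : ∀ x : ℝ, -(π/4) ≤ x → x ≤ π/4 → Real.sqrt 2 / 2 ≤ Real.cos x := by
      intro x h1 h2
      have : Real.cos (π/4) ≤ Real.cos |x| := by
        apply Real.cos_le_cos_of_nonneg_of_le_pi (abs_nonneg x) (by linarith)
        exact abs_le.mpr ⟨h1, h2⟩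
      rw [Real.cos_abs, Real.cos_pi_div_four] at this
      exact this
    have hcφ := hcosb φ hφ1 hφ2
    have hcψ := hcosb ψ hψ1 hψ2
    have hcφ0 : (0:ℝ) < Real.cos φ := by linarith
    have hcψ0 : (0:ℝ) < Real.cos ψ := by linarith
    have hprod : (1:ℝ)/2 ≤ Real.cos φ * Real.cos ψ := by
      have h := mul_le_mul hcφ hcψ (by positivity) hcφ0.le
      nlinarith [h, hs2]
    have heq : Real.tan φ + Real.tan ψ = Real.sin (φ + ψ) / (Real.cos φ * Real.cos ψ) := by
      rw [Real.tan_eq_sin_div_cos, Real.tan_eq_sin_div_cos, Real.sin_add,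
        div_add_div _ _ hcφ0.ne' hcψ0.ne']
    rw [heq, abs_div, abs_of_pos (by positivity : (0:ℝ) < Real.cos φ * Real.cos ψ)]
    have hsin : |Real.sin (φ + ψ)| ≤ 2.222 * δ :=
      le_trans Real.abs_sin_le_abs hsum
    rw [div_le_iff₀ (by positivity)]
    calc |Real.sin (φ + ψ)| ≤ 2.222 * δ := hsin
      _ = 4.444 * δ * (1/2) := by ring
      _ ≤ 4.444 * δ * (Real.cos φ * Real.cos ψ) :=
        mul_le_mul_of_nonneg_left hprod (by nlinarith)
end

section
/- Suppose φ = π/4 - α and ψ = -π/4 + β with α, β ≥ 0, α + β ≤ 2.222·δ, and 0 ≤ δ ≤ 0.0045. Then max{|cot 2φ|, |cot 2ψ|, |cot 2φ + cot 2ψ|} ≤ 4.49·δ. -/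
open Real

lemma tan_small_bound (x c : ℝ) (hx : 0 ≤ x) (hxc : x ≤ c) (hc : c ≤ 0.02) :
    Real.tan x ≤ 1.0102 * c := by
  have hcos : (0.999 : ℝ) ≤ Real.cos x := by
    have := Real.one_sub_sq_div_two_le_cos (x := x)
    nlinarith
  have hsin : Real.sin x ≤ x := Real.sin_le hx
  have hcpos : (0:ℝ) < Real.cos x := by linarith
  rw [Real.tan_eq_sin_div_cos, div_le_iff₀ hcpos]
  nlinarith

lemma tan_small_nonneg (x : ℝ) (hx : 0 ≤ x) (hx2 : x ≤ 1) : 0 ≤ Real.tan x := by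
  rw [Real.tan_eq_sin_div_cos]
  have h1 : 0 ≤ Real.sin x :=
    Real.sin_nonneg_of_nonneg_of_le_pi hx (by nlinarith [Real.pi_gt_three])
  have h2 : 0 ≤ Real.cos x := Real.cos_nonneg_of_mem_Icc
    ⟨by linarith [Real.pi_gt_three], by nlinarith [Real.pi_gt_three]⟩
  positivity

lemma cot_pi_div_two_sub' (x : ℝ) : Real.cot (π/2 - x) = Real.tan x := by
  rw [Real.cot_eq_cos_div_sin, Real.cos_pi_div_two_sub, Real.sin_pi_div_two_sub,
    Real.tan_eq_sin_div_cos]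

theorem cot_bounds_near_corners (δ α β φ ψ : ℝ)
    (hδ0 : 0 ≤ δ) (hδ : δ ≤ 0.0045)
    (hα : 0 ≤ α) (hβ : 0 ≤ β) (hab : α + β ≤ 2.222 * δ)
    (hφ : φ = π/4 - α) (hψ : ψ = -(π/4) + β) :
    max (max |Real.cot (2 * φ)| |Real.cot (2 * ψ)|)
        |Real.cot (2 * φ) + Real.cot (2 * ψ)| ≤ 4.49 * δ := by
  have h1 : Real.cot (2 * φ) = Real.tan (2 * α) := by
    rw [hφ, show 2 * (π/4 - α) = π/2 - 2*α by ring, cot_pi_div_two_sub']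
  have h2 : Real.cot (2 * ψ) = - Real.tan (2 * β) := by
    rw [hψ, show 2 * (-(π/4) + β) = -(π/2 - 2*β) by ring, Real.cot_eq_cos_div_sin,
      Real.cos_neg, Real.sin_neg, Real.cos_pi_div_two_sub, Real.sin_pi_div_two_sub,
      Real.tan_eq_sin_div_cos]
    ring
  have hta : 0 ≤ Real.tan (2 * α) := tan_small_nonneg _ (by linarith) (by linarith)
  have htb : 0 ≤ Real.tan (2 * β) := tan_small_nonneg _ (by linarith) (by linarith)
  have hba : Real.tan (2 * α) ≤ 1.0102 * (2 * 2.222 * δ) :=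
    tan_small_bound _ _ (by linarith) (by linarith) (by nlinarith)
  have hbb : Real.tan (2 * β) ≤ 1.0102 * (2 * 2.222 * δ) :=
    tan_small_bound _ _ (by linarith) (by linarith) (by nlinarith)
  rw [h1, h2, abs_neg, abs_of_nonneg hta, abs_of_nonneg htb,
    show Real.tan (2*α) + -Real.tan (2*β) = Real.tan (2*α) - Real.tan (2*β) by ring]
  have habs : |Real.tan (2*α) - Real.tan (2*β)| ≤ 1.0102 * (2 * 2.222 * δ) := by
    rw [abs_sub_le_iff]; constructor <;> linarith
  simp only [max_le_iff]
  refine ⟨⟨by linarith, by linarith⟩, by linarith⟩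
end
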